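/- Let Φ = (G, φ) be a 2-connected non-geodetic T-gain graph. Then Φ is distance-incompatible if and only if there exists an unbalanced even cycle C in Φ containing two diametrically opposite vertices s and t of C such that d_G(s,t) equals half the length of C (i.e., s and t have no shorter connecting path in G). -/

import Mathlib

open Matrix
open scoped Classical

noncomputable section

namespace GG

variable {V : Type*}

/-- The gain of a walk: product of the gains of its oriented edges. -/
def walkGain {G : SimpleGraph V} (φ : V → V → ℂ) {u v : V} (p : G.Walk u v) : ℂ :=
  (p.darts.map (fun d => φ d.toProd.1 d.toProd.2)).prod

/-- `φ` is a `𝕋`-gain function on `G`: unit modulus on edges, inverse under reversal. -/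
def IsGain (G : SimpleGraph V) (φ : V → V → ℂ) : Prop :=
  (∀ i j, G.Adj i j → ‖φ i j‖ = 1) ∧ (∀ i j, G.Adj i j → φ j i = (φ i j)⁻¹)

/-- Adjacency matrix of a gain graph. -/
def gainAdj [Fintype V] [DecidableEq V] (G : SimpleGraph V) (φ : V → V → ℂ) :
    Matrix V V ℂ := fun i j => if G.Adj i j then φ i j else 0

/-- A gain graph is balanced if every cycle has gain 1. -/
def GBalanced (G : SimpleGraph V) (φ : V → V → ℂ) : Prop :=
  ∀ (u : V) (c : G.Walk u u), c.IsCycle → walkGain φ c = 1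

/-- All shortest paths between any pair of vertices have the same gain. -/
def DistCompatible (G : SimpleGraph V) (φ : V → V → ℂ) : Prop :=
  ∀ (s t : V) (p q : G.Walk s t), p.length = G.dist s t → q.length = G.dist s t →
    walkGain φ p = walkGain φ q

/-- The set of gains of shortest `s`-`t` paths. -/
def shortestGains (G : SimpleGraph V) (φ : V → V → ℂ) (s t : V) : Set ℂ :=
  {z | ∃ p : G.Walk s t, p.length = G.dist s t ∧ walkGain φ p = z}

/-- The element of `S` maximizing the real part, ties broken by maximal imaginary part
(correct for finite nonempty sets of gains). -/
def lexMaxGain (S : Set ℂ) : ℂ :=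
  ⟨sSup (Complex.re '' S), sSup (Complex.im '' {z ∈ S | z.re = sSup (Complex.re '' S)})⟩

/-- The element of `S` minimizing the real part, ties broken by minimal imaginary part. -/
def lexMinGain (S : Set ℂ) : ℂ :=
  ⟨sInf (Complex.re '' S), sInf (Complex.im '' {z ∈ S | z.re = sInf (Complex.re '' S)})⟩

/-- The maximum gain distance matrix `D^max_<(Φ)` with respect to a strict order `lt`. -/
def Dmax [Fintype V] [DecidableEq V] (G : SimpleGraph V) (φ : V → V → ℂ)
    (lt : V → V → Prop) : Matrix V V ℂ := fun s t =>
  if lt s t then lexMaxGain (shortestGains G φ s t) * (G.dist s t : ℂ)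
  else if lt t s then (starRingEnd ℂ) (lexMaxGain (shortestGains G φ t s)) * (G.dist s t : ℂ)
  else 0

/-- The minimum gain distance matrix `D^min_<(Φ)` with respect to a strict order `lt`. -/
def Dmin [Fintype V] [DecidableEq V] (G : SimpleGraph V) (φ : V → V → ℂ)
    (lt : V → V → Prop) : Matrix V V ℂ := fun s t =>
  if lt s t then lexMinGain (shortestGains G φ s t) * (G.dist s t : ℂ)
  else if lt t s then (starRingEnd ℂ) (lexMinGain (shortestGains G φ t s)) * (G.dist s t : ℂ)
  else 0

/-- Vertex order independence: the gain distance matrices agree for the standard order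
and its reverse. -/
def OrderIndependent [Fintype V] [DecidableEq V] [LinearOrder V] (G : SimpleGraph V)
    (φ : V → V → ℂ) : Prop :=
  Dmax G φ (· < ·) = Dmax G φ (fun a b => b < a) ∧
  Dmin G φ (· < ·) = Dmin G φ (fun a b => b < a)

/-- The largest (real) eigenvalue of a matrix. -/
def maxEig [Fintype V] [DecidableEq V] (A : Matrix V V ℂ) : ℝ :=
  sSup {r : ℝ | (r : ℂ) ∈ spectrum ℂ A}

/-- The spectral radius of a matrix. -/
def specRad [Fintype V] [DecidableEq V] (A : Matrix V V ℂ) : ℝ :=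
  sSup {r : ℝ | ∃ z ∈ spectrum ℂ A, ‖z‖ = r}

/-- The distance matrix of the underlying graph, as a complex matrix. -/
def distMatrix [Fintype V] [DecidableEq V] (G : SimpleGraph V) : Matrix V V ℂ :=
  fun i j => (G.dist i j : ℂ)

/-- Weighted gain adjacency matrix `A(Φ_w)`. -/
def wGainAdj [Fintype V] [DecidableEq V] (G : SimpleGraph V) (φ : V → V → ℂ)
    (w : V → V → ℝ) : Matrix V V ℂ := fun i j => if G.Adj i j then φ i j * (w i j : ℂ) else 0

/-- Weighted adjacency matrix `A(G_w)` of the underlying weighted graph. -/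
def wAdj [Fintype V] [DecidableEq V] (G : SimpleGraph V) (w : V → V → ℝ) :
    Matrix V V ℂ := fun i j => if G.Adj i j then (w i j : ℂ) else 0


/-- `G` is 2-connected: connected, at least 3 vertices, and no cut vertex. -/
def TwoConnected {V : Type*} [Fintype V] (G : SimpleGraph V) : Prop :=
  G.Connected ∧ 3 ≤ Fintype.card V ∧
    ∀ v : V, (G.induce ({v}ᶜ : Set V)).Connected

lemma walkGain_append {G : SimpleGraph V} (φ : V → V → ℂ) {u v w : V}
    (p : G.Walk u v) (q : G.Walk v w) :
    walkGain φ (p.append q) = walkGain φ p * walkGain φ q := by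
  simp [walkGain, SimpleGraph.Walk.darts_append]

lemma walkGain_reverse_mul {G : SimpleGraph V} {φ : V → V → ℂ} (hφ : IsGain G φ) {u v : V}
    (p : G.Walk u v) : walkGain φ p.reverse * walkGain φ p = 1 := by
  induction p with
  | nil => simp [walkGain]
  | @cons u w v ha p' ih =>
    have h1 : φ w u * φ u w = 1 := by
      rw [hφ.2 u w ha]
      refine inv_mul_cancel₀ ?_
      intro h0
      have := hφ.1 u w ha
      rw [h0] at this; simp at this
    have hcg : walkGain φ (SimpleGraph.Walk.cons ha p') = φ u w * walkGain φ p' := by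
      simp [walkGain]
    rw [SimpleGraph.Walk.reverse_cons, walkGain_append, hcg]
    have hsing : walkGain φ (SimpleGraph.Walk.cons ha.symm SimpleGraph.Walk.nil) = φ w u := by
      simp [walkGain]
    rw [hsing]
    calc walkGain φ p'.reverse * φ w u * (φ u w * walkGain φ p')
        = (walkGain φ p'.reverse * walkGain φ p') * (φ w u * φ u w) := by ring
      _ = 1 := by rw [ih, h1, one_mul]

lemma walkGain_reverse {G : SimpleGraph V} {φ : V → V → ℂ} (hφ : IsGain G φ) {u v : V}
    (p : G.Walk u v) : walkGain φ p.reverse = (walkGain φ p)⁻¹ := by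
  exact eq_inv_of_mul_eq_one_left (walkGain_reverse_mul hφ p)

lemma walkGain_ne_zero {G : SimpleGraph V} {φ : V → V → ℂ} (hφ : IsGain G φ) {u v : V}
    (p : G.Walk u v) : walkGain φ p ≠ 0 := by
  rw [walkGain]
  apply List.prod_ne_zero
  intro h0
  obtain ⟨d, hd, hd0⟩ := List.mem_map.mp h0
  have h1 := hφ.1 _ _ d.adj
  rw [hd0] at h1
  simp at h1

lemma walkGain_of_length_zero {G : SimpleGraph V} (φ : V → V → ℂ) {u v : V}
    (p : G.Walk u v) (h : p.length = 0) : walkGain φ p = 1 := by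
  cases p with
  | nil => simp [walkGain]
  | cons ha p' => simp at h

lemma walkGain_of_length_one {G : SimpleGraph V} (φ : V → V → ℂ) {u v : V}
    (p : G.Walk u v) (h : p.length = 1) : walkGain φ p = φ u v := by
  cases p with
  | nil => simp at h
  | @cons u w v ha p' =>
    have h0 : p'.length = 0 := by simpa using h
    have hv := SimpleGraph.Walk.eq_of_length_eq_zero h0
    subst hv
    have hz := walkGain_of_length_zero φ p' h0
    have hcg : walkGain φ (SimpleGraph.Walk.cons ha p') = φ u w * walkGain φ p' := by
      simp [walkGain]
    rw [hcg, hz, mul_one]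

/-- a 2-connected non-geodetic gain graph is distance-incompatible iff it has
an unbalanced even cycle with two diametrically opposite vertices `s`, `t` such that
`d_G(s,t)` is half the cycle length (no shorter connecting path exists). -/
theorem distIncompatible_iff_unbalanced_even_cycle {V : Type*} [Fintype V] [DecidableEq V]
    (G : SimpleGraph V) (φ : V → V → ℂ) (hφ : IsGain G φ) (h2 : TwoConnected G)
    (hngeo : ∃ (s t : V) (p q : G.Walk s t),
      p.length = G.dist s t ∧ q.length = G.dist s t ∧ p ≠ q) :
    (¬ DistCompatible G φ) ↔
      ∃ (s t : V) (p q : G.Walk s t),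
        (p.append q.reverse).IsCycle ∧ p.length = q.length ∧
        walkGain φ (p.append q.reverse) ≠ 1 ∧ G.dist s t = p.length := by
  have hconn := h2.1
  constructor
  · intro hnc
    have hB : ∃ n : ℕ, ∃ s t : V, G.dist s t = n ∧ ∃ p q : G.Walk s t,
        p.length = G.dist s t ∧ q.length = G.dist s t ∧ walkGain φ p ≠ walkGain φ q := by
      rw [DistCompatible] at hnc
      push_neg at hnc
      obtain ⟨s, t, p, q, hp, hq, hne⟩ := hnc
      exact ⟨G.dist s t, s, t, rfl, p, q, hp, hq, hne⟩
    obtain ⟨s, t, hst, p, q, hp, hq, hne⟩ := Nat.find_spec hB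
    set n := Nat.find hB with hn
    have hmin : ∀ m, m < n → ¬ ∃ s t : V, G.dist s t = m ∧ ∃ p q : G.Walk s t,
        p.length = G.dist s t ∧ q.length = G.dist s t ∧ walkGain φ p ≠ walkGain φ q :=
      fun m hm => Nat.find_min hB hm
    have hpn : p.length = n := hp.trans hst
    have hqn : q.length = n := hq.trans hst
    have hn2 : 2 ≤ n := by
      by_contra hlt
      push_neg at hlt
      have hcase : n = 0 ∨ n = 1 := by omega
      rcases hcase with h0 | h1
      · exact hne ((walkGain_of_length_zero φ p (by omega)).trans
          (walkGain_of_length_zero φ q (by omega)).symm)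
      · exact hne ((walkGain_of_length_one φ p (by omega)).trans
          (walkGain_of_length_one φ q (by omega)).symm)
    have hsne : s ≠ t := by
      intro h
      subst h
      have : G.dist s s = 0 := SimpleGraph.dist_self
      omega
    have hadj : ¬ G.Adj s t := by
      intro h
      have hle := SimpleGraph.dist_le (SimpleGraph.Walk.cons h SimpleGraph.Walk.nil)
      simp at hle
      omega
    have split : ∀ (w : V) (r : G.Walk s t), r.length = n → ∀ hw : w ∈ r.support,
        (r.takeUntil w hw).length = G.dist s w ∧ (r.dropUntil w hw).length = G.dist w t ∧
        G.dist s w + G.dist w t = n := by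
      intro w r hr hw
      have hspec := r.take_spec hw
      have hlen : (r.takeUntil w hw).length + (r.dropUntil w hw).length = n := by
        rw [← SimpleGraph.Walk.length_append, hspec, hr]
      have h1 := SimpleGraph.dist_le (r.takeUntil w hw)
      have h2 := SimpleGraph.dist_le (r.dropUntil w hw)
      have h3 : G.dist s t ≤ G.dist s w + G.dist w t :=
        SimpleGraph.Connected.dist_triangle hconn
      omega
    have hdisj : ∀ w, w ∈ p.support → w ∈ q.support → w = s ∨ w = t := by
      intro w hwp hwq
      by_contra hcon
      push_neg at hcon
      obtain ⟨hws, hwt⟩ := hcon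
      obtain ⟨hp1, hp2, hsum⟩ := split w p hpn hwp
      obtain ⟨hq1, hq2, _⟩ := split w q hqn hwq
      have hzs : G.dist s w ≠ 0 := by
        intro h0
        exact hws (SimpleGraph.Walk.eq_of_length_eq_zero (hp1.trans h0)).symm
      have hzt : G.dist w t ≠ 0 := by
        intro h0
        exact hwt (SimpleGraph.Walk.eq_of_length_eq_zero (hp2.trans h0))
      have hpsplit : walkGain φ p
          = walkGain φ (p.takeUntil w hwp) * walkGain φ (p.dropUntil w hwp) := by
        conv_lhs => rw [← p.take_spec hwp]
        exact walkGain_append φ _ _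
      have hqsplit : walkGain φ q
          = walkGain φ (q.takeUntil w hwq) * walkGain φ (q.dropUntil w hwq) := by
        conv_lhs => rw [← q.take_spec hwq]
        exact walkGain_append φ _ _
      by_cases hg : walkGain φ (p.takeUntil w hwp) = walkGain φ (q.takeUntil w hwq)
      · have hg2 : walkGain φ (p.dropUntil w hwp) ≠ walkGain φ (q.dropUntil w hwq) := by
          intro h
          exact hne (by rw [hpsplit, hqsplit, hg, h])
        exact hmin (G.dist w t) (by omega)
          ⟨w, t, rfl, p.dropUntil w hwp, q.dropUntil w hwq, hp2, hq2, hg2⟩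
      · exact hmin (G.dist s w) (by omega)
          ⟨s, w, rfl, p.takeUntil w hwp, q.takeUntil w hwq, hp1, hq1, hg⟩
    have hpp : p.IsPath := p.isPath_of_length_eq_dist hp
    have hqp : q.IsPath := q.isPath_of_length_eq_dist hq
    refine ⟨s, t, p, q, ?_, by rw [hp, hq], ?_, hp.symm⟩
    · have key : ∀ a b : V, s(a, b) ∈ p.edges → s(a, b) ∈ q.edges → False := by
        intro a b hep heq
        have haP := p.fst_mem_support_of_mem_edges hep
        have hbP := p.snd_mem_support_of_mem_edges hep
        have haQ := q.fst_mem_support_of_mem_edges heq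
        have hbQ := q.snd_mem_support_of_mem_edges heq
        have hab := p.adj_of_mem_edges hep
        rcases hdisj a haP haQ with ha | ha <;> rcases hdisj b hbP hbQ with hb | hb <;>
          subst ha <;> subst hb
        · exact G.irrefl hab
        · exact hadj hab
        · exact hadj hab.symm
        · exact G.irrefl hab
      refine ⟨⟨⟨?_⟩, ?_⟩, ?_⟩
      · rw [SimpleGraph.Walk.edges_append, SimpleGraph.Walk.edges_reverse]
        refine List.Nodup.append hpp.isTrail.edges_nodup
          (List.nodup_reverse.mpr hqp.isTrail.edges_nodup) ?_
        intro e hep heq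
        rw [List.mem_reverse] at heq
        revert hep heq
        induction e using Sym2.ind with
        | _ a b => exact fun hep heq => key a b hep heq
      · intro hnil
        have hlen0 : (p.append q.reverse).length = 0 := by rw [hnil]; rfl
        rw [SimpleGraph.Walk.length_append] at hlen0
        omega
      · have hsupp : (p.append q.reverse).support.tail
            = p.support.tail ++ q.reverse.support.tail := by
          rw [SimpleGraph.Walk.support_append, SimpleGraph.Walk.support_eq_cons p,
            List.cons_append, List.tail_cons]
          rfl
        rw [hsupp]
        have hps : s ∉ p.support.tail := by
          have hnd := hpp.support_nodup
          rw [SimpleGraph.Walk.support_eq_cons p] at hnd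
          exact (List.nodup_cons.mp hnd).1
        have hqt : t ∉ q.reverse.support.tail := by
          have hnd := hqp.reverse.support_nodup
          rw [SimpleGraph.Walk.support_eq_cons q.reverse] at hnd
          exact (List.nodup_cons.mp hnd).1
        refine List.Nodup.append ?_ ?_ ?_
        · have hnd := hpp.support_nodup
          rw [SimpleGraph.Walk.support_eq_cons p] at hnd
          exact (List.nodup_cons.mp hnd).2
        · have hnd := hqp.reverse.support_nodup
          rw [SimpleGraph.Walk.support_eq_cons q.reverse] at hnd
          exact (List.nodup_cons.mp hnd).2
        · intro x hx1 hx2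
          have hxp : x ∈ p.support := List.mem_of_mem_tail hx1
          have hxq : x ∈ q.support := by
            have hxr : x ∈ q.reverse.support := List.mem_of_mem_tail hx2
            rwa [SimpleGraph.Walk.support_reverse, List.mem_reverse] at hxr
          rcases hdisj x hxp hxq with h | h
          · subst h; exact hps hx1
          · subst h; exact hqt hx2
    · rw [walkGain_append, walkGain_reverse hφ]
      intro h1
      exact hne ((mul_inv_eq_one₀ (walkGain_ne_zero hφ q)).mp h1)
  · rintro ⟨s, t, p, q, hc, hlen, hg, hd⟩ hcomp
    apply hg
    have h1 : p.length = G.dist s t := hd.symm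
    have h2' : q.length = G.dist s t := by rw [← hlen]; exact hd.symm
    have heq := hcomp s t p q h1 h2'
    rw [walkGain_append, walkGain_reverse hφ, heq,
      mul_inv_cancel₀ (walkGain_ne_zero hφ q)]

end GG
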